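/- Uniqueness on symmetric data: if a hierarchical clustering method satisfies the Axioms of Value and Transformation, then on every symmetric network (A_X(x,x') = A_X(x',x) for all x, x') its output coincides with single linkage: u_X(x,x') = min over chains C(x,x') of max_i A_X(x_i, x_{i+1}). -/

import Mathlib

/-- Maximum dissimilarity over consecutive links of a chain (list of nodes). -/
def listCost {X : Type*} (A : X → X → ℝ) (l : List X) : ℝ :=
  (l.zip l.tail).foldr (fun p r => max (A p.1 p.2) r) 0

/-- Minimum over chains from `x` to `x'` of the maximum link cost. -/
noncomputable def minChainCost {X : Type*} (A : X → X → ℝ) (x x' : X) : ℝ :=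
  sInf {c : ℝ | ∃ l : List X, l.head? = some x ∧ l.getLast? = some x' ∧ listCost A l = c}

/-- Symmetrized dissimilarity Ā. -/
def symDis {X : Type*} (A : X → X → ℝ) (x x' : X) : ℝ := max (A x x') (A x' x)

/-- Reciprocal ultrametric. -/
noncomputable def uR {X : Type*} (A : X → X → ℝ) (x x' : X) : ℝ := minChainCost (symDis A) x x'

/-- Nonreciprocal ultrametric. -/
noncomputable def uNR {X : Type*} (A : X → X → ℝ) (x x' : X) : ℝ :=
  max (minChainCost A x x') (minChainCost A x' x)

/-- A (finite, asymmetric) network dissimilarity: nonnegative, vanishing exactly on the diagonal. -/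
def IsNetwork {X : Type*} (A : X → X → ℝ) : Prop :=
  (∀ x x', 0 ≤ A x x') ∧ (∀ x x', A x x' = 0 ↔ x = x')

/-- Ultrametric: nonnegative, symmetric, identity of indiscernibles, strong triangle inequality. -/
def IsUltra {X : Type*} (u : X → X → ℝ) : Prop :=
  (∀ x x', 0 ≤ u x x') ∧ (∀ x x', u x x' = u x' x) ∧
  (∀ x x', u x x' = 0 ↔ x = x') ∧
  (∀ x x' x'', u x x' ≤ max (u x x'') (u x'' x'))


section Aux
variable {X : Type*} (A : X → X → ℝ)

lemma foldrMax_nonneg : ∀ L : List (X × X), 0 ≤ L.foldr (fun p r => max (A p.1 p.2) r) 0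
  | [] => le_refl 0
  | _ :: L => le_max_of_le_right (foldrMax_nonneg L)

lemma listCost_nonneg (l : List X) : 0 ≤ listCost A l := foldrMax_nonneg A _

lemma le_foldrMax {a b : X} : ∀ L : List (X × X), (a, b) ∈ L →
    A a b ≤ L.foldr (fun p r => max (A p.1 p.2) r) 0
  | p :: L, h => by
      rcases List.mem_cons.mp h with h | h
      · subst h; exact le_max_left _ _
      · exact le_max_of_le_right (le_foldrMax L h)

lemma foldrMax_mem : ∀ L : List (X × X),
    L.foldr (fun p r => max (A p.1 p.2) r) 0 ∈ insert (0:ℝ) (Set.range fun p : X × X => A p.1 p.2)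
  | [] => Set.mem_insert _ _
  | p :: L => by
      rcases max_choice (A p.1 p.2) (L.foldr (fun q r => max (A q.1 q.2) r) 0) with h | h
      · rw [List.foldr_cons, h]; exact Set.mem_insert_of_mem _ ⟨p, rfl⟩
      · rw [List.foldr_cons, h]; exact foldrMax_mem L

lemma listCost_nil : listCost A ([] : List X) = 0 := rfl
lemma listCost_single (a : X) : listCost A [a] = 0 := rfl
lemma listCost_cons_cons (a b : X) (t : List X) :
    listCost A (a :: b :: t) = max (A a b) (listCost A (b :: t)) := rfl

lemma listCost_concat : ∀ (l : List X) (a b : X), l.getLast? = some a →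
    listCost A (l ++ [b]) = max (listCost A l) (A a b)
  | [], a, b, h => by simp at h
  | [c], a, b, h => by
      simp at h
      subst h
      show listCost A [c, b] = max (listCost A [c]) (A c b)
      rw [listCost_cons_cons, listCost_single, listCost_single]
      exact max_comm _ _
  | c :: d :: t, a, b, h => by
      rw [List.getLast?_cons_cons] at h
      have ih := listCost_concat (d :: t) a b h
      show listCost A (c :: ((d :: t) ++ [b])) = _
      have : c :: ((d :: t) ++ [b]) = c :: d :: (t ++ [b]) := rfl
      rw [this]
      rw [listCost_cons_cons]
      show max (A c d) (listCost A ((d :: t) ++ [b])) = _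
      rw [ih, listCost_cons_cons, max_assoc]

def chainSet (x x' : X) : Set ℝ :=
  {c : ℝ | ∃ l : List X, l.head? = some x ∧ l.getLast? = some x' ∧ listCost A l = c}

lemma minChainCost_def (x x' : X) : minChainCost A x x' = sInf (chainSet A x x') := rfl

lemma chainSet_nonempty (x x' : X) : (chainSet A x x').Nonempty :=
  ⟨_, [x, x'], by simp, by simp, rfl⟩

lemma chainSet_finite [Fintype X] (x x' : X) : (chainSet A x x').Finite :=
  Set.Finite.subset (Set.Finite.insert 0 (Set.finite_range _))
    (by rintro c ⟨l, -, -, rfl⟩; exact foldrMax_mem A _)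

lemma minChainCost_mem [Fintype X] (x x' : X) : minChainCost A x x' ∈ chainSet A x x' :=
  Set.Nonempty.csInf_mem (chainSet_nonempty A x x') (chainSet_finite A x x')

lemma minChainCost_le [Fintype X] {x x' : X} {c : ℝ} (h : c ∈ chainSet A x x') :
    minChainCost A x x' ≤ c :=
  csInf_le (chainSet_finite A x x').bddBelow h

lemma minChainCost_nonneg [Fintype X] (x x' : X) : 0 ≤ minChainCost A x x' := by
  obtain ⟨l, -, -, hc⟩ := minChainCost_mem A x x'
  rw [← hc]; exact listCost_nonneg A l

lemma minChainCost_self [Fintype X] (x : X) : minChainCost A x x = 0 :=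
  le_antisymm (minChainCost_le A ⟨[x], by simp, by simp, rfl⟩) (minChainCost_nonneg A x x)

lemma minChainCost_step [Fintype X] (x z z' : X) :
    minChainCost A x z' ≤ max (minChainCost A x z) (A z z') := by
  obtain ⟨l, h1, h2, h3⟩ := minChainCost_mem A x z
  have hne : l ≠ [] := by rintro rfl; simp at h1
  obtain ⟨a, t, rfl⟩ := List.exists_cons_of_ne_nil hne
  refine minChainCost_le A ⟨(a :: t) ++ [z'], ?_, ?_, ?_⟩
  · simpa using h1
  · show ((a :: t) ++ [z']).getLast? = some z'
    exact List.getLast?_concat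
  · rw [listCost_concat A _ z z' h2, h3]

lemma exists_ne_link : ∀ (l : List X) (x x' : X), l.head? = some x → l.getLast? = some x' →
    x ≠ x' → ∃ a b, (a, b) ∈ l.zip l.tail ∧ a ≠ b
  | [], x, x', h, _, _ => by simp at h
  | [c], x, x', h1, h2, hne => by
      simp at h1 h2
      exact absurd (h1.symm.trans h2) hne
  | c :: d :: t, x, x', h1, h2, hne => by
      simp only [List.head?_cons, Option.some_inj] at h1
      rw [List.getLast?_cons_cons] at h2
      by_cases hcd : c = d
      · obtain ⟨a, b, hm, hab⟩ := exists_ne_link (d :: t) d x' rfl h2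
          (by rw [← hcd, h1]; exact hne)
        refine ⟨a, b, ?_, hab⟩
        show (a, b) ∈ (c :: d :: t).zip (d :: t)
        rw [List.zip_cons_cons]
        exact List.mem_cons_of_mem _ hm
      · refine ⟨c, d, ?_, hcd⟩
        show (c, d) ∈ (c :: d :: t).zip (d :: t)
        rw [List.zip_cons_cons]
        exact List.mem_cons_self

lemma minChainCost_pos [Fintype X] (hA : IsNetwork A) {x x' : X} (hne : x ≠ x') :
    0 < minChainCost A x x' := by
  obtain ⟨l, h1, h2, h3⟩ := minChainCost_mem A x x'
  obtain ⟨a, b, hm, hab⟩ := exists_ne_link l x x' h1 h2 hne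
  have hle : A a b ≤ listCost A l := le_foldrMax A _ hm
  have hpos : 0 < A a b := lt_of_le_of_ne (hA.1 a b) (fun h => hab ((hA.2 a b).mp h.symm))
  rw [← h3]; exact lt_of_lt_of_le hpos hle

end Aux

/-- Two-point symmetric dissimilarity with common value `v`. -/
def twoDis (v : ℝ) : Bool → Bool → ℝ := fun b b' => if b = b' then 0 else v

lemma twoDis_network {v : ℝ} (hv : 0 < v) : IsNetwork (twoDis v) := by
  constructor
  · intro b b'; unfold twoDis; split_ifs
    · exact le_refl 0
    · exact hv.le
  · intro b b'; unfold twoDis; split_ifs with h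
    · simp [h]
    · simp [h, hv.ne']

lemma chain_bound {X : Type} (A : X → X → ℝ) (h : X → X → ℝ)
    (hself : ∀ a, h a a = 0) (hedge : ∀ a b, h a b ≤ A a b)
    (htri : ∀ a b c, h a b ≤ max (h a c) (h c b)) :
    ∀ (l : List X) (x x' : X), l.head? = some x → l.getLast? = some x' →
      h x x' ≤ listCost A l := by
  intro l
  induction l with
  | nil => intro x x' h1 _; simp at h1
  | cons a t ih =>
    intro x x' h1 h2
    simp only [List.head?_cons, Option.some_inj] at h1
    subst h1
    cases t with
    | nil =>
      simp at h2
      subst h2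
      rw [hself]
      exact listCost_nonneg A _
    | cons d t' =>
      rw [List.getLast?_cons_cons] at h2
      have hd : h d x' ≤ listCost A (d :: t') := ih d x' rfl h2
      rw [listCost_cons_cons]
      exact le_trans (htri a x' d) (max_le_max (hedge a d) hd)

theorem uniqueness_on_symmetric_data
    (H : ∀ (X : Type) [Fintype X], (X → X → ℝ) → (X → X → ℝ))
    (hUltra : ∀ (X : Type) [Fintype X] (A : X → X → ℝ), IsNetwork A → IsUltra (H X A))
    (hValue : ∀ (X : Type) [Fintype X] (A : X → X → ℝ), IsNetwork A →
      ∀ p q : X, p ≠ q → (∀ x : X, x = p ∨ x = q) →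
        H X A p q = max (A p q) (A q p))
    (hTransf : ∀ (X Y : Type) [Fintype X] [Fintype Y]
        (A_X : X → X → ℝ) (A_Y : Y → Y → ℝ), IsNetwork A_X → IsNetwork A_Y →
      ∀ φ : X → Y, (∀ x x' : X, A_Y (φ x) (φ x') ≤ A_X x x') →
        ∀ x x' : X, H Y A_Y (φ x) (φ x') ≤ H X A_X x x') :
    ∀ (X : Type) [Fintype X] (A : X → X → ℝ), IsNetwork A →
      (∀ x x' : X, A x x' = A x' x) →
      ∀ x x' : X, H X A x x' = minChainCost A x x' := by
  intro X _ A hA hsym x x'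
  obtain ⟨hpos, hsymH, hzero, htri⟩ := hUltra X A hA
  -- edge bound: H z z' ≤ A z z' for z ≠ z'
  have hedge : ∀ z z' : X, z ≠ z' → H X A z z' ≤ A z z' := by
    intro z z' hne
    have hv : 0 < A z z' := lt_of_le_of_ne (hA.1 z z') (fun h => hne ((hA.2 z z').mp h.symm))
    have hN2 : IsNetwork (twoDis (A z z')) := twoDis_network hv
    have hval : H Bool (twoDis (A z z')) false true = A z z' := by
      rw [hValue Bool (twoDis (A z z')) hN2 false true (by simp) (fun b => by cases b <;> simp)]
      simp [twoDis]
    have hT := hTransf Bool X (twoDis (A z z')) A hN2 hA (fun b : Bool => if b then z' else z)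
      (by
        intro b b'
        cases b <;> cases b' <;>
          simp [twoDis, (hA.2 z z).mpr rfl, (hA.2 z' z').mpr rfl, (hsym z' z).le])
      false true
    simpa [hval] using hT
  by_cases hxx : x = x'
  · subst hxx
    rw [(hzero x x).mpr rfl, minChainCost_self A x]
  · apply le_antisymm
    · -- H ≤ single linkage
      obtain ⟨l, h1, h2, h3⟩ := minChainCost_mem A x x'
      rw [← h3]
      refine chain_bound A (H X A) (fun a => (hzero a a).mpr rfl) ?_ (fun a b c => htri a b c)
        l x x' h1 h2
      intro a b
      by_cases hab : a = b
      · subst hab; rw [(hzero a a).mpr rfl]; exact hA.1 a a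
      · exact hedge a b hab
    · -- single linkage ≤ H
      have hδ : 0 < minChainCost A x x' := minChainCost_pos A hA hxx
      have hN2 : IsNetwork (twoDis (minChainCost A x x')) := twoDis_network hδ
      have hval : H Bool (twoDis (minChainCost A x x')) false true = minChainCost A x x' := by
        rw [hValue Bool (twoDis (minChainCost A x x')) hN2 false true (by simp)
          (fun b => by cases b <;> simp)]
        simp [twoDis]
      have hred : ∀ z z' : X,
          twoDis (minChainCost A x x')
            (if minChainCost A x z < minChainCost A x x' then false else true)
            (if minChainCost A x z' < minChainCost A x x' then false else true) ≤ A z z' := by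
        intro z z'
        by_cases h1 : minChainCost A x z < minChainCost A x x' <;>
          by_cases h2 : minChainCost A x z' < minChainCost A x x'
        · simp only [if_pos h1, if_pos h2, twoDis, if_pos rfl]; exact hA.1 z z'
        · simp only [if_pos h1, if_neg h2, twoDis]
          rw [if_neg (by simp)]
          rcases le_max_iff.mp (le_trans (not_lt.mp h2) (minChainCost_step A x z z')) with h3 | h3
          · exact absurd (lt_of_le_of_lt h3 h1) (lt_irrefl _)
          · exact h3
        · simp only [if_neg h1, if_pos h2, twoDis]
          rw [if_neg (by simp)]
          rcases le_max_iff.mp (le_trans (not_lt.mp h1) (minChainCost_step A x z' z)) with h3 | h3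
          · exact absurd (lt_of_le_of_lt h3 h2) (lt_irrefl _)
          · rw [hsym z z']; exact h3
        · simp only [if_neg h1, if_neg h2, twoDis, if_pos rfl]; exact hA.1 z z'
      have hT := hTransf X Bool A (twoDis (minChainCost A x x')) hA hN2
        (fun z : X => if minChainCost A x z < minChainCost A x x' then false else true)
        hred x x'
      rw [if_pos (by rw [minChainCost_self A x]; exact hδ), if_neg (lt_irrefl _), hval] at hT
      exact hT
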